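/- An operator T: X ⇉ X* is quasimonotone if and only if T ⊆ T^ν, if and only if T^{νν} ⊆ T^ν, if and only if T^{νν} is quasimonotone, if and only if cone(T) is quasimonotone, if and only if cone(T) ∪ (X × {0}) is quasimonotone. -/

import Mathlib

open NormedSpace

variable {X : Type*} [NormedAddCommGroup X] [NormedSpace ℝ X]

/-- quasimonotone relation: (x,x*) ∼q (y,y*) iff min{⟨y−x,x*⟩, ⟨x−y,y*⟩} ≤ 0 -/
def qrel (p q : X × StrongDual ℝ X) : Prop :=
  min (p.2 (q.1 - p.1)) (q.2 (p.1 - q.1)) ≤ 0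

/-- quasimonotone polar -/
def qpolar (T : Set (X × StrongDual ℝ X)) : Set (X × StrongDual ℝ X) :=
  {p | ∀ q ∈ T, qrel p q}

/-- imagewise conic hull of an operator -/
def coneOp (T : Set (X × StrongDual ℝ X)) : Set (X × StrongDual ℝ X) :=
  {p | ∃ t : ℝ, 0 ≤ t ∧ ∃ v, (p.1, v) ∈ T ∧ p.2 = t • v}

def QuasiMono (T : Set (X × StrongDual ℝ X)) : Prop := ∀ p ∈ T, ∀ q ∈ T, qrel p q

def MaxQuasiMono (T : Set (X × StrongDual ℝ X)) : Prop :=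
  QuasiMono T ∧ ∀ S, QuasiMono S → T ⊆ S → S = T

def Vset (T : Set (X × StrongDual ℝ X)) (x : X) : Set X :=
  {y | ∃ y' : StrongDual ℝ X, (y, y') ∈ T ∧ 0 < y' (x - y)}

/-- the image T^ν(x) of the quasimonotone polar -/
def polarIm (T : Set (X × StrongDual ℝ X)) (x : X) : Set (StrongDual ℝ X) :=
  {x' | (x, x') ∈ qpolar T}

/-- normal cone of C at x (no convexity or membership assumed) -/
def normalCone (C : Set X) (x : X) : Set (StrongDual ℝ X) :=
  {x' | ∀ y ∈ C, x' (y - x) ≤ 0}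

def im (T : Set (X × StrongDual ℝ X)) (x : X) : Set (StrongDual ℝ X) := {v | (x, v) ∈ T}

/-- effective domain: T(u) nonempty and ≠ {0} -/
def edom (T : Set (X × StrongDual ℝ X)) : Set X :=
  {u | (im T u).Nonempty ∧ im T u ≠ {0}}

/-- conic hull of a set in the dual -/
def coneSet (A : Set (StrongDual ℝ X)) : Set (StrongDual ℝ X) :=
  {v | ∃ t : ℝ, 0 ≤ t ∧ ∃ a ∈ A, v = t • a}

def Eset (T : Set (X × StrongDual ℝ X)) : Set X := {x | Vset T x = ∅}

/-- solution set of the Minty variational inequality for S on K -/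
def Minty (S : Set (X × StrongDual ℝ X)) (K : Set X) : Set X :=
  {x ∈ K | ∀ q ∈ S, q.1 ∈ K → q.2 (x - q.1) ≤ 0}

def AEMaxQuasiMono (T : Set (X × StrongDual ℝ X)) : Prop :=
  QuasiMono T ∧ ∀ S, QuasiMono S → (∀ x ∈ edom T, im T x ⊆ coneSet (im S x)) →
    (∀ x ∈ edom T, coneSet (im T x) = coneSet (im S x)) ∧ edom T = edom S


lemma qrel_symm {p q : X × StrongDual ℝ X} (h : qrel p q) : qrel q p := by
  unfold qrel at h ⊢; rw [min_comm]; exact h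

lemma subset_qpolar_qpolar (T : Set (X × StrongDual ℝ X)) : T ⊆ qpolar (qpolar T) :=
  fun p hp q hq => qrel_symm (hq p hp)

lemma qpolar_anti {A B : Set (X × StrongDual ℝ X)} (h : A ⊆ B) : qpolar B ⊆ qpolar A :=
  fun p hp q hq => hp q (h hq)


theorem stmt12 [CompleteSpace X] (T : Set (X × StrongDual ℝ X)) :
    (QuasiMono T ↔ T ⊆ qpolar T) ∧
    (QuasiMono T ↔ qpolar (qpolar T) ⊆ qpolar T) ∧
    (QuasiMono T ↔ QuasiMono (qpolar (qpolar T))) ∧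
    (QuasiMono T ↔ QuasiMono (coneOp T)) ∧
    (QuasiMono T ↔ QuasiMono (coneOp T ∪ Set.univ ×ˢ ({0} : Set (StrongDual ℝ X)))) := by
  have h1 : QuasiMono T ↔ T ⊆ qpolar T :=
    ⟨fun h p hp q hq => h p hp q hq, fun h p hp q hq => h hp q hq⟩
  have h2 : QuasiMono T ↔ qpolar (qpolar T) ⊆ qpolar T := by
    constructor
    · intro h
      exact qpolar_anti (h1.mp h)
    · intro h
      exact h1.mpr (fun p hp => h (subset_qpolar_qpolar T hp))
  have h3 : QuasiMono T ↔ QuasiMono (qpolar (qpolar T)) := by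
    constructor
    · intro h p hp q hq
      exact hp q (h2.mp h hq)
    · intro h p hp q hq
      exact h p (subset_qpolar_qpolar T hp) q (subset_qpolar_qpolar T hq)
  have h4 : QuasiMono T ↔ QuasiMono (coneOp T) := by
    constructor
    · intro h p hp q hq
      obtain ⟨t, ht, u, hu, hpu⟩ := hp
      obtain ⟨s, hs, v, hv, hqv⟩ := hq
      have hT := h (p.1, u) hu (q.1, v) hv
      unfold qrel at hT ⊢
      rw [hpu, hqv]
      simp only [ContinuousLinearMap.smul_apply, smul_eq_mul]
      rcases min_le_iff.mp hT with h' | h'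
      · exact min_le_of_left_le (mul_nonpos_of_nonneg_of_nonpos ht h')
      · exact min_le_of_right_le (mul_nonpos_of_nonneg_of_nonpos hs h')
    · intro h p hp q hq
      exact h p ⟨1, zero_le_one, p.2, hp, (one_smul _ _).symm⟩
               q ⟨1, zero_le_one, q.2, hq, (one_smul _ _).symm⟩
  have h5 : QuasiMono (coneOp T) ↔
      QuasiMono (coneOp T ∪ Set.univ ×ˢ ({0} : Set (StrongDual ℝ X))) := by
    constructor
    · intro h p hp q hq
      rcases hq with hq | hq
      · rcases hp with hp | hp
        · exact h p hp q hq
        · have hp0 : p.2 = 0 := hp.2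
          unfold qrel
          rw [hp0]
          simp [min_le_iff]
      · have hq0 : q.2 = 0 := hq.2
        unfold qrel
        rw [hq0]
        simp [min_le_iff]
    · intro h p hp q hq
      exact h p (Or.inl hp) q (Or.inl hq)
  exact ⟨h1, h2, h3, h4, h4.trans h5⟩
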